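/- Let m ≥ 0 and h ≥ k ≥ 1 be integers. Then one has the identity of polynomials in the variable s over F = ℂ(q): β_m^{(h,k)}(s) = Σ_{i=0}^{m} C(m,i) · β_{m−i}^{(h+i,k)} · ((1 − s)/(1 − q^{-2}))^i, where β_{m−i}^{(h+i,k)} = β_{m−i}^{(h+i,k)}(1) is the q-Bernoulli number of order k. -/

import Mathlib

/-!
STATEMENT 1: For integers m ≥ 0 and h ≥ k ≥ 1, the identity of polynomials in s over
F = ℂ(q):  β_m^{(h,k)}(s) = Σ_{i=0}^{m} C(m,i) · β_{m−i}^{(h+i,k)} · ((1−s)/(1−q^{-2}))^i.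
-/

noncomputable section

/-- The field F = ℂ(q) of rational functions in one variable q. -/
abbrev F : Type := RatFunc ℂ

/-- The variable q ∈ ℂ(q). -/
def q : F := RatFunc.X

/-- The q-integer [n]_q = Σ_{j=0}^{n-1} q^{-2j}. -/
def qnum (n : ℕ) : F := ∑ j ∈ Finset.range n, (q⁻¹ ^ 2) ^ j

/-- The falling factorial (a)_b = a(a−1)⋯(a−b+1), for a natural, in F. -/
def fallF (a b : ℕ) : F := ∏ j ∈ Finset.range b, ((a : F) - (j : F))

/-- The q-falling factorial ([a]_q)_b = [a]_q [a−1]_q ⋯ [a−b+1]_q (used with a ≥ b). -/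
def qfallF (a b : ℕ) : F := ∏ j ∈ Finset.range b, qnum (a - j)

/-- The q-Bernoulli polynomial of order k,
β_m^{(h,k)}(s) = (1 − q^{-2})^{-m} Σ_{i=0}^{m} C(m,i) ((i+h)_k/([i+h]_q)_k)(−s)^i,
as a polynomial in the variable s over F (s stands for q^{-2ξ}). -/
def qBernoulliPoly (m h k : ℕ) : Polynomial F :=
  Polynomial.C ((1 - q⁻¹ ^ 2)⁻¹ ^ m) *
    ∑ i ∈ Finset.range (m + 1),
      Polynomial.C ((m.choose i : F) * (fallF (i + h) k / qfallF (i + h) k)) *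
        (- Polynomial.X) ^ i

/-- The q-Bernoulli number β_m^{(h,k)} = β_m^{(h,k)}(1) (value at s = 1, i.e. ξ = 0). -/
def qBernoulliNum (m h k : ℕ) : F := (qBernoulliPoly m h k).eval 1


lemma core {R : Type*} [CommRing R] (a : ℕ → R) (y : R) (m : ℕ) :
    ∑ n ∈ Finset.range (m+1), (m.choose n : R) * a n * (y - 1)^n
    = ∑ i ∈ Finset.range (m+1), (m.choose i : R) *
        (∑ j ∈ Finset.range (m - i + 1), ((m-i).choose j : R) * a (i+j) * (-1:R)^j) * y^i := by
  have h1 : ∀ n, (y - 1)^n = ∑ i ∈ Finset.range (n+1), y^i * (-1:R)^(n-i) * (n.choose i : R) := by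
    intro n
    rw [sub_eq_add_neg, add_pow]
  have step1 : ∑ n ∈ Finset.range (m+1), (m.choose n : R) * a n * (y - 1)^n
      = ∑ n ∈ Finset.range (m+1), ∑ i ∈ Finset.range (n+1),
          (fun i j => (m.choose (i+j) : R) * a (i+j) * y^i * (-1:R)^j * (((i+j).choose i : R))) i (n - i) := by
    refine Finset.sum_congr rfl fun n _ => ?_
    rw [h1, Finset.mul_sum]
    refine Finset.sum_congr rfl fun i hi => ?_
    have hin : i ≤ n := Nat.lt_succ_iff.mp (Finset.mem_range.mp hi)
    have : i + (n - i) = n := by omega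
    simp only [this]
    ring
  have step2 := Finset.sum_range_diag_flip (m+1)
      (fun i j => (m.choose (i+j) : R) * a (i+j) * y^i * (-1:R)^j * (((i+j).choose i : R)))
  rw [step1, step2]
  refine Finset.sum_congr rfl fun i hi => ?_
  have him : i ≤ m := Nat.lt_succ_iff.mp (Finset.mem_range.mp hi)
  have hr : m + 1 - i = m - i + 1 := by omega
  rw [hr, Finset.mul_sum, Finset.sum_mul]
  refine Finset.sum_congr rfl fun j hj => ?_
  have hjm : i + j ≤ m := by
    have := Nat.lt_succ_iff.mp (Finset.mem_range.mp hj); omega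
  have hcm := Nat.choose_mul (n := m) (k := i + j) (s := i) (Nat.le_add_right i j)
  have hcm' : ((m.choose (i+j) : R)) * (((i+j).choose i : R)) = (m.choose i : R) * ((m-i).choose (i + j - i) : R) := by
    exact_mod_cast congrArg (Nat.cast : ℕ → R) hcm
  have : i + j - i = j := by omega
  rw [this] at hcm'
  calc (m.choose (i+j) : R) * a (i+j) * y^i * (-1:R)^j * (((i+j).choose i : R))
      = ((m.choose (i+j) : R)) * (((i+j).choose i : R)) * a (i+j) * (-1:R)^j * y^i := by ring
    _ = (m.choose i : R) * ((m-i).choose j : R) * a (i+j) * (-1:R)^j * y^i := by rw [hcm']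
    _ = _ := by ring

lemma qBernoulliNum_eq (n h : ℕ) (k : ℕ) :
    qBernoulliNum n h k = ((1 - q⁻¹^2)⁻¹)^n *
      ∑ j ∈ Finset.range (n+1), (n.choose j : F) * (fallF (j+h) k / qfallF (j+h) k) * (-1:F)^j := by
  simp [qBernoulliNum, qBernoulliPoly, Polynomial.eval_finset_sum]

/-- β_m^{(h,k)}(s) = Σ_{i=0}^{m} C(m,i) β_{m−i}^{(h+i,k)} ((1−s)/(1−q^{-2}))^i,
an identity of polynomials in the variable s over F, for m ≥ 0 and h ≥ k ≥ 1. -/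
theorem qBernoulliPoly_eq_sum_qBernoulliNum (m h k : ℕ) (hk : 1 ≤ k) (hhk : k ≤ h) :
    qBernoulliPoly m h k =
      ∑ i ∈ Finset.range (m + 1),
        Polynomial.C ((m.choose i : F) * qBernoulliNum (m - i) (h + i) k) *
          (Polynomial.C (1 - q⁻¹ ^ 2)⁻¹ * (1 - Polynomial.X)) ^ i := by
  have key := core (R := Polynomial F)
    (fun n => Polynomial.C (fallF (n + h) k / qfallF (n + h) k)) (1 - Polynomial.X) m
  have hL : qBernoulliPoly m h k = Polynomial.C ((1 - q⁻¹^2)⁻¹^m) *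
      ∑ n ∈ Finset.range (m+1), (m.choose n : Polynomial F) *
        Polynomial.C (fallF (n+h) k / qfallF (n+h) k) * ((1 - Polynomial.X) - 1)^n := by
    unfold qBernoulliPoly
    congr 1
    refine Finset.sum_congr rfl fun n _ => ?_
    have h2 : ((1 : Polynomial F) - Polynomial.X - 1) = - Polynomial.X := by ring
    rw [h2, Polynomial.C_mul, map_natCast]
  rw [hL, key, Finset.mul_sum]
  refine Finset.sum_congr rfl fun i hi => ?_
  have him : i ≤ m := Nat.lt_succ_iff.mp (Finset.mem_range.mp hi)
  rw [qBernoulliNum_eq]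
  simp only [show ∀ j : ℕ, j + (h + i) = i + j + h from fun j => by omega]
  have hc : (Polynomial.C ((1 - q⁻¹^2)⁻¹ ^ m) : Polynomial F)
      = Polynomial.C ((1 - q⁻¹^2)⁻¹ ^ (m-i)) * Polynomial.C (1 - q⁻¹^2)⁻¹ ^ i := by
    rw [← Polynomial.C_pow, ← Polynomial.C_mul, ← pow_add, Nat.sub_add_cancel him]
  rw [hc]
  simp only [map_mul, map_pow, map_sum, map_natCast, map_neg, map_one]
  rw [mul_pow]
  ring

end
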